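/- The assignments 1 ↦ I₂, v₁ ↦ [[z₁,0],[0,−z₁]], v₂ ↦ [[0,z₂],[z₂,0]] extend to an injective K-algebra homomorphism ε^(2) : E^(2) → M₂(K[z₁,z₂]/(z₁²,z₂²)), and moreover tr(ε^(2)(g)) ∈ K for every g ∈ E^(2). -/

import Mathlib

variable (K : Type*) [Field K] [CharZero K]

def TruncPoly2 : Type _ :=
  MvPolynomial (Fin 2) K ⧸
    Ideal.span {(MvPolynomial.X 0 : MvPolynomial (Fin 2) K) ^ 2, MvPolynomial.X 1 ^ 2}

noncomputable instance : CommRing (TruncPoly2 K) := by unfold TruncPoly2; infer_instance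
noncomputable instance : Algebra K (TruncPoly2 K) := by unfold TruncPoly2; infer_instance

noncomputable def zres (i : Fin 2) : TruncPoly2 K :=
  Ideal.Quotient.mk _ (MvPolynomial.X i)

open MvPolynomial in
lemma coeff_mem_span (p : MvPolynomial (Fin 2) K)
    (hp : p ∈ Ideal.span {(X 0 : MvPolynomial (Fin 2) K) ^ 2, X 1 ^ 2})
    (m : Fin 2 →₀ ℕ) (h0 : m 0 ≤ 1) (h1 : m 1 ≤ 1) : coeff m p = 0 := by
  rw [Ideal.mem_span_pair] at hp
  obtain ⟨f, g, rfl⟩ := hp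
  rw [coeff_add, X_pow_eq_monomial, X_pow_eq_monomial, mul_comm f, mul_comm g,
    coeff_monomial_mul', coeff_monomial_mul']
  rw [if_neg, if_neg, add_zero]
  · rw [Finsupp.single_le_iff]; omega
  · rw [Finsupp.single_le_iff]; omega

open MvPolynomial in
lemma zres_sq (i : Fin 2) : zres K i * zres K i = 0 := by
  have h : zres K i * zres K i = Ideal.Quotient.mk _ ((X i : MvPolynomial (Fin 2) K) * X i) := rfl
  rw [h]; refine Ideal.Quotient.eq_zero_iff_mem.mpr ?_; rw [← sq]
  fin_cases i
  · exact Ideal.subset_span (Set.mem_insert _ _)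
  · exact Ideal.subset_span (Set.mem_insert_of_mem _ rfl)

noncomputable def matA : Matrix (Fin 2) (Fin 2) (TruncPoly2 K) :=
  !![zres K 0, 0; 0, -(zres K 0)]

noncomputable def matB : Matrix (Fin 2) (Fin 2) (TruncPoly2 K) :=
  !![0, zres K 1; zres K 1, 0]

lemma matA_sq : matA K * matA K = 0 := by
  ext i j
  fin_cases i <;> fin_cases j <;>
    simp [matA, Matrix.mul_apply, Fin.sum_univ_two, zres_sq]

lemma matB_sq : matB K * matB K = 0 := by
  ext i j
  fin_cases i <;> fin_cases j <;>
    simp [matB, Matrix.mul_apply, Fin.sum_univ_two, zres_sq]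

lemma matAB : matA K * matB K + matB K * matA K = 0 := by
  ext i j
  fin_cases i <;> fin_cases j <;>
    simp [matA, matB, Matrix.mul_apply, Fin.sum_univ_two, mul_comm]

noncomputable def fmap : (Fin 2 → K) →ₗ[K] Matrix (Fin 2) (Fin 2) (TruncPoly2 K) where
  toFun v := v 0 • matA K + v 1 • matB K
  map_add' x y := by simp only [Pi.add_apply, add_smul]; abel
  map_smul' c x := by simp only [Pi.smul_apply, smul_eq_mul, mul_smul, RingHom.id_apply, smul_add]

lemma fmap_sq (v : Fin 2 → K) : fmap K v * fmap K v = 0 := by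
  show (v 0 • matA K + v 1 • matB K) * (v 0 • matA K + v 1 • matB K) = 0
  simp only [add_mul, mul_add, smul_mul_assoc, mul_smul_comm, matA_sq, matB_sq, smul_zero,
    zero_add, add_zero, smul_smul]
  rw [mul_comm (v 1) (v 0), ← smul_add, add_comm, matAB, smul_zero]

open ExteriorAlgebra in
noncomputable def eps : ExteriorAlgebra K (Fin 2 → K) →ₐ[K] Matrix (Fin 2) (Fin 2) (TruncPoly2 K) :=
  ExteriorAlgebra.lift K ⟨fmap K, fmap_sq K⟩

lemma eps_a : eps K (ExteriorAlgebra.ι K (Pi.single 0 1)) = matA K := by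
  rw [eps, ExteriorAlgebra.lift_ι_apply]
  show (Pi.single 0 1 : Fin 2 → K) 0 • matA K + (Pi.single 0 1 : Fin 2 → K) 1 • matB K = matA K
  simp

lemma eps_b : eps K (ExteriorAlgebra.ι K (Pi.single 1 1)) = matB K := by
  rw [eps, ExteriorAlgebra.lift_ι_apply]
  show (Pi.single 1 1 : Fin 2 → K) 0 • matA K + (Pi.single 1 1 : Fin 2 → K) 1 • matB K = matB K
  simp

noncomputable def genA : ExteriorAlgebra K (Fin 2 → K) :=
  ExteriorAlgebra.ι K (Pi.single 0 1)

noncomputable def genB : ExteriorAlgebra K (Fin 2 → K) :=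
  ExteriorAlgebra.ι K (Pi.single 1 1)

lemma genA_sq : genA K * genA K = 0 := ExteriorAlgebra.ι_sq_zero _
lemma genB_sq : genB K * genB K = 0 := ExteriorAlgebra.ι_sq_zero _
lemma genBA : genB K * genA K = -(genA K * genB K) :=
  eq_neg_of_add_eq_zero_left
    (by rw [add_comm]; exact ExteriorAlgebra.ι_add_mul_swap _ _)

noncomputable def gen : Fin 4 → ExteriorAlgebra K (Fin 2 → K)
  | ⟨0, _⟩ => 1
  | ⟨1, _⟩ => genA K
  | ⟨2, _⟩ => genB K
  | ⟨3, _⟩ => genA K * genB K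

@[simp] lemma gen_zero : gen K 0 = 1 := rfl
@[simp] lemma gen_one : gen K 1 = genA K := rfl
@[simp] lemma gen_two : gen K 2 = genB K := rfl
@[simp] lemma gen_three : gen K 3 = genA K * genB K := rfl

lemma span_gen : Submodule.span K (Set.range (gen K)) = ⊤ := by
  set S := Submodule.span K (Set.range (gen K)) with hS
  have hmem : ∀ i, gen K i ∈ S := fun i => Submodule.subset_span ⟨i, rfl⟩
  have h1 : (1 : ExteriorAlgebra K (Fin 2 → K)) ∈ S := hmem 0
  have hA : genA K ∈ S := hmem 1
  have hB : genB K ∈ S := hmem 2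
  have hAB : genA K * genB K ∈ S := hmem 3
  have hprod : ∀ i j, gen K i * gen K j ∈ S := by
    intro i j
    fin_cases i <;> fin_cases j <;>
      simp only [gen, one_mul, mul_one]
    · exact h1
    · exact hA
    · exact hB
    · exact hAB
    · exact hA
    · rw [genA_sq]; exact Submodule.zero_mem S
    · exact hAB
    · rw [← mul_assoc, genA_sq, zero_mul]; exact Submodule.zero_mem S
    · exact hB
    · rw [genBA]; exact Submodule.neg_mem S hAB
    · rw [genB_sq]; exact Submodule.zero_mem S
    · rw [← mul_assoc, genBA, neg_mul, mul_assoc, genB_sq, mul_zero, neg_zero]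
      exact Submodule.zero_mem S
    · exact hAB
    · rw [mul_assoc, genBA, mul_neg, ← mul_assoc, genA_sq, zero_mul, neg_zero]
      exact Submodule.zero_mem S
    · rw [mul_assoc, genB_sq, mul_zero]; exact Submodule.zero_mem S
    · rw [mul_assoc, ← mul_assoc (genB K), genBA, neg_mul, mul_assoc, genB_sq, mul_zero,
        neg_zero, mul_zero]
      exact Submodule.zero_mem S
  have hmul : ∀ x ∈ S, ∀ y ∈ S, x * y ∈ S := by
    intro x hx
    induction hx using Submodule.span_induction with
    | mem x hx =>
      obtain ⟨i, rfl⟩ := hx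
      intro y hy
      induction hy using Submodule.span_induction with
      | mem y hy => obtain ⟨j, rfl⟩ := hy; exact hprod i j
      | zero => rw [mul_zero]; exact Submodule.zero_mem S
      | add y z _ _ py pz => rw [mul_add]; exact Submodule.add_mem S py pz
      | smul c y _ py => rw [mul_smul_comm]; exact Submodule.smul_mem S c py
    | zero => intro y hy; rw [zero_mul]; exact Submodule.zero_mem S
    | add x z _ _ px pz => intro y hy; rw [add_mul]
                           exact Submodule.add_mem S (px y hy) (pz y hy)
    | smul c x _ px => intro y hy; rw [smul_mul_assoc]
                       exact Submodule.smul_mem S c (px y hy)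
  rw [eq_top_iff]
  intro x hx
  clear hx
  induction x using ExteriorAlgebra.induction with
  | algebraMap r => rw [Algebra.algebraMap_eq_smul_one]; exact Submodule.smul_mem S r h1
  | ι v =>
    have hv : ExteriorAlgebra.ι K v = v 0 • genA K + v 1 • genB K := by
      rw [genA, genB, ← map_smul, ← map_smul, ← map_add]
      congr 1
      ext i; fin_cases i <;> simp
    rw [hv]
    exact Submodule.add_mem S (Submodule.smul_mem S _ hA) (Submodule.smul_mem S _ hB)
  | mul x y px py => exact hmul x px y py
  | add x y px py => exact Submodule.add_mem S px py

open MvPolynomial in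
lemma trunc_indep (c0 c1 c2 c3 : K)
    (h : algebraMap K (TruncPoly2 K) c0 + c1 • zres K 0 + c2 • zres K 1 +
      c3 • (zres K 0 * zres K 1) = 0) :
    c0 = 0 ∧ c1 = 0 ∧ c2 = 0 ∧ c3 = 0 := by
  set I : Ideal (MvPolynomial (Fin 2) K) := Ideal.span {X 0 ^ 2, X 1 ^ 2} with hI
  have e : algebraMap K (TruncPoly2 K) c0 + c1 • zres K 0 + c2 • zres K 1 +
      c3 • (zres K 0 * zres K 1)
      = Ideal.Quotient.mkₐ K I (C c0 + c1 • X 0 + c2 • X 1 + c3 • (X 0 * X 1)) := by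
    simp only [map_add, map_smul, map_mul]
    rfl
  rw [e] at h
  have hq : (C c0 + c1 • X 0 + c2 • X 1 + c3 • (X 0 * X 1) : MvPolynomial (Fin 2) K) ∈ I := by
    rw [Ideal.Quotient.mkₐ_eq_mk] at h; exact Ideal.Quotient.eq_zero_iff_mem.mp h
  have key : ∀ m : Fin 2 →₀ ℕ, m 0 ≤ 1 → m 1 ≤ 1 →
      coeff m (C c0 + c1 • X 0 + c2 • X 1 + c3 • (X 0 * X 1) : MvPolynomial (Fin 2) K) = 0 :=
    fun m hm0 hm1 => coeff_mem_span K _ hq m hm0 hm1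
  have k00 := key 0 (by simp) (by simp)
  have k10 := key (Finsupp.single 0 1) (by simp) (by simp [Finsupp.single_apply])
  have k01 := key (Finsupp.single 1 1) (by simp [Finsupp.single_apply]) (by simp)
  have k11 := key (Finsupp.single 0 1 + Finsupp.single 1 1)
    (by simp [Finsupp.single_apply]) (by simp [Finsupp.single_apply])
  have hXX : (X 0 * X 1 : MvPolynomial (Fin 2) K)
      = monomial (Finsupp.single 0 1 + Finsupp.single 1 1) 1 := by
    rw [X, X, monomial_mul, one_mul]
  rw [hXX] at k00 k10 k01 k11
  simp [coeff_add, coeff_C, coeff_smul, coeff_X', coeff_monomial,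
    Finsupp.single_eq_zero] at k00 k10 k01 k11
  have n1 : (0 : Fin 2 →₀ ℕ) ≠ Finsupp.single 0 1 := by
    intro h; have := DFunLike.congr_fun h 0; simp at this
  have n2 : (Finsupp.single 1 1 : Fin 2 →₀ ℕ) ≠ Finsupp.single 0 1 := by
    intro h; have := DFunLike.congr_fun h 0; simp [Finsupp.single_apply] at this
  have n3 : (Finsupp.single 0 1 : Fin 2 →₀ ℕ) ≠ Finsupp.single 1 1 := by
    intro h; have := DFunLike.congr_fun h 0; simp [Finsupp.single_apply] at this
  have n4 : (0 : Fin 2 →₀ ℕ) ≠ Finsupp.single 0 1 + Finsupp.single 1 1 := by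
    intro h; have := DFunLike.congr_fun h 0; simp [Finsupp.single_apply] at this
  have n5 : (0 : Fin 2 →₀ ℕ) ≠ Finsupp.single 1 1 := by
    intro h; have := DFunLike.congr_fun h 1; simp at this
  rw [if_neg n1, if_neg n2, zero_add, add_zero] at k10
  rw [if_neg n5, if_neg n3, zero_add, zero_add] at k01
  rw [if_neg n4, zero_add] at k11
  exact ⟨k00, k10, k01, k11⟩

lemma matAmulB : matA K * matB K =
    !![0, zres K 0 * zres K 1; -(zres K 0 * zres K 1), 0] := by
  ext i j
  fin_cases i <;> fin_cases j <;>
    simp [matA, matB, Matrix.mul_apply, Fin.sum_univ_two]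

lemma eps_genA : eps K (genA K) = matA K := eps_a K
lemma eps_genB : eps K (genB K) = matB K := eps_b K

lemma eps_sum (c : Fin 4 → K) :
    eps K (∑ i, c i • gen K i) =
      c 0 • 1 + c 1 • matA K + c 2 • matB K + c 3 • (matA K * matB K) := by
  rw [map_sum, Fin.sum_univ_four]
  simp only [map_smul, gen_zero, gen_one, gen_two, gen_three, map_one, map_mul,
    eps_genA, eps_genB]

/-- The assignments `v₁ ↦ [[z₁,0],[0,−z₁]]`, `v₂ ↦ [[0,z₂],[z₂,0]]` extend to an
injective `K`-algebra homomorphism `ε⁽²⁾ : E⁽²⁾ → M₂(K[z₁,z₂]/(z₁²,z₂²))` with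
`tr (ε⁽²⁾ g)` a scalar from `K` for every `g`. -/
theorem stmt_3 :
    ∃ ε : ExteriorAlgebra K (Fin 2 → K) →ₐ[K] Matrix (Fin 2) (Fin 2) (TruncPoly2 K),
      Function.Injective ε ∧
      ε (ExteriorAlgebra.ι K (Pi.single 0 1)) = !![zres K 0, 0; 0, -(zres K 0)] ∧
      ε (ExteriorAlgebra.ι K (Pi.single 1 1)) = !![0, zres K 1; zres K 1, 0] ∧
      ∀ g : ExteriorAlgebra K (Fin 2 → K),
        ∃ k : K, Matrix.trace (ε g) = algebraMap K (TruncPoly2 K) k := by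
  refine ⟨eps K, ?_, eps_a K, eps_b K, ?_⟩
  · rw [injective_iff_map_eq_zero]
    intro x hx
    obtain ⟨c, rfl⟩ := (Submodule.mem_span_range_iff_exists_fun K).mp
      (by rw [span_gen K]; exact Submodule.mem_top : x ∈ Submodule.span K (Set.range (gen K)))
    rw [eps_sum] at hx
    have h00 := congrFun (congrFun hx 0) 0
    have h01 := congrFun (congrFun hx 0) 1
    rw [matAmulB] at h00 h01
    simp [matA, matB, Matrix.one_apply] at h00 h01
    have e00 : algebraMap K (TruncPoly2 K) (c 0) + c 1 • zres K 0 + (0:K) • zres K 1 +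
        (0:K) • (zres K 0 * zres K 1) = 0 := by
      rw [Algebra.algebraMap_eq_smul_one, zero_smul, zero_smul, add_zero, add_zero]
      exact h00
    have e01 : algebraMap K (TruncPoly2 K) 0 + (0:K) • zres K 0 + c 2 • zres K 1 +
        c 3 • (zres K 0 * zres K 1) = 0 := by
      rw [map_zero, zero_smul, zero_add, zero_add]
      exact h01
    obtain ⟨hc0, hc1, -, -⟩ := trunc_indep K _ _ _ _ e00
    obtain ⟨-, -, hc2, hc3⟩ := trunc_indep K _ _ _ _ e01
    rw [Fin.sum_univ_four, hc0, hc1, hc2, hc3]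
    simp
  · intro g
    obtain ⟨c, rfl⟩ := (Submodule.mem_span_range_iff_exists_fun K).mp
      (by rw [span_gen K]; exact Submodule.mem_top : g ∈ Submodule.span K (Set.range (gen K)))
    refine ⟨2 * c 0, ?_⟩
    rw [eps_sum, matAmulB]
    simp [Matrix.trace, Matrix.diag, Fin.sum_univ_two, matA, matB, Matrix.one_apply,
      -map_mul]
    rw [Algebra.algebraMap_eq_smul_one]
    rw [two_mul, add_smul]; abel
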